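/- arXiv:math/9906058 — 2 statements merged into one kernel-verified Lean document; each statement's English description precedes it below -/
import Mathlib

section
/- Let m ≥ 0 and n ≥ 2m be integers and let r ∈ ℝ with |r| > 1. Then the (ordinary Lebesgue) integral ∫_{−1}^{1} T_n(s)·(1−s²)^{m−1/2}/(s−r) ds equals π·(−1)^{m+1}·sgn(r)·(r²−1)^{m−1/2}·( r − sgn(r)·√(r²−1) )^n, where sgn(r) = |r|/r denotes the sign of r. -/
open Real MeasureTheory intervalIntegral Set


noncomputable def Aint (m k : ℕ) : ℝ := ∫ θ in (0:ℝ)..π, cos (k*θ) * sin θ ^ (2*m)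

lemma int_cos_nat (k : ℕ) (hk : 0 < k) : ∫ θ in (0:ℝ)..π, cos (k*θ) = 0 := by
  have hk' : (k:ℝ) ≠ 0 := by positivity
  rw [intervalIntegral.integral_comp_mul_left (fun x => cos x) hk']
  simp [integral_cos, Real.sin_nat_mul_pi]

lemma contA (m k : ℕ) : Continuous fun θ : ℝ => cos (k*θ) * sin θ ^ (2*m) := by
  continuity

lemma A_eq_zero : ∀ (m k : ℕ), 2*m < k → Aint m k = 0 := by
  intro m
  induction m with
  | zero => intro k hk; simpa [Aint] using int_cos_nat k hk
  | succ m ih =>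
    intro k hk
    obtain ⟨l, rfl⟩ : ∃ l, k = l + 2 := ⟨k - 2, by omega⟩
    have key : ∀ θ : ℝ, cos ((l+2:ℕ)*θ) * sin θ ^ (2*(m+1))
        = (1/2) * (cos ((l+2:ℕ)*θ) * sin θ ^ (2*m))
          - (1/4) * (cos ((l+4:ℕ)*θ) * sin θ ^ (2*m))
          - (1/4) * (cos ((l:ℕ)*θ) * sin θ ^ (2*m)) := by
      intro θ
      have e1 : ((l+4:ℕ):ℝ)*θ = (l+2:ℕ)*θ + 2*θ := by push_cast; ring
      have e2 : ((l:ℕ):ℝ)*θ = (l+2:ℕ)*θ - 2*θ := by push_cast; ring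
      rw [e1, e2, cos_add, cos_sub, cos_two_mul, sin_two_mul]
      have hs2 : sin θ^2 = 1 - cos θ^2 := by
        have := sin_sq_add_cos_sq θ; linarith
      linear_combination (cos (((l+2:ℕ):ℝ)*θ) * sin θ ^ (2*m)) * hs2
    have hInt : ∀ (j : ℕ), IntervalIntegrable (fun θ : ℝ => cos (j*θ) * sin θ ^ (2*m)) volume 0 π :=
      fun j => (contA m j).intervalIntegrable _ _
    have : Aint (m+1) (l+2) = (1/2) * Aint m (l+2) - (1/4) * Aint m (l+4) - (1/4) * Aint m l := by
      unfold Aint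
      rw [intervalIntegral.integral_congr (fun θ _ => key θ)]
      rw [intervalIntegral.integral_sub ((((hInt (l+2)).const_mul _).sub ((hInt (l+4)).const_mul _)))
        ((hInt l).const_mul _),
        intervalIntegral.integral_sub ((hInt (l+2)).const_mul _) ((hInt (l+4)).const_mul _),
        intervalIntegral.integral_const_mul, intervalIntegral.integral_const_mul,
        intervalIntegral.integral_const_mul]
    rw [this, ih (l+2) (by omega), ih (l+4) (by omega), ih l (by omega)]
    ring

lemma J00 (r : ℝ) (hr : 1 < r) :
    ∫ θ in (0:ℝ)..π, 1/(cos θ - r) = -π / Real.sqrt (r^2-1) := by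
  have hD : 0 < r^2 - 1 := by nlinarith
  have hsD : 0 < Real.sqrt (r^2-1) := Real.sqrt_pos.2 hD
  have hss : Real.sqrt (r^2-1) * Real.sqrt (r^2-1) = r^2-1 := Real.mul_self_sqrt hD.le
  have hden : ∀ θ : ℝ, 0 < r - cos θ := fun θ => by
    have := cos_le_one θ; linarith
  set u : ℝ → ℝ := fun θ => (r * cos θ - 1)/(r - cos θ) with hu_def
  set F : ℝ → ℝ := fun θ => -(1/Real.sqrt (r^2-1)) * arccos (u θ) with hF_def
  have hucont : Continuous u := by
    apply Continuous.div (by continuity) (by continuity)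
    exact fun θ => (hden θ).ne'
  have hFcont : ContinuousOn F (Icc 0 π) :=
    (continuous_const.mul (Real.continuous_arccos.comp hucont)).continuousOn
  have hu_sq : ∀ θ : ℝ, 1 - u θ ^ 2 = (r^2-1) * sin θ ^ 2 / (r - cos θ)^2 := by
    intro θ
    have h2 : sin θ ^ 2 = 1 - cos θ ^ 2 := sin_sq θ
    rw [hu_def]
    field_simp [(hden θ).ne']
    ring_nf
    linear_combination (-(r^2-1)) * h2
  have hderiv : ∀ θ ∈ Ioo (0:ℝ) π, HasDerivAt F (1/(cos θ - r)) θ := by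
    intro θ hθ
    have hsin : 0 < sin θ := sin_pos_of_pos_of_lt_pi hθ.1 hθ.2
    have husq : 0 < 1 - u θ ^ 2 := by
      rw [hu_sq θ]
      exact div_pos (mul_pos hD (pow_pos hsin 2)) (pow_pos (hden θ) 2)
    have hu1 : u θ ≠ -1 := by nlinarith [husq]
    have hu2 : u θ ≠ 1 := by nlinarith [husq]
    have hud : HasDerivAt u (sin θ * (1 - r^2) / (r - cos θ)^2) θ := by
      have h1 : HasDerivAt (fun θ => r * cos θ - 1) (r * (-sin θ)) θ :=
        ((hasDerivAt_cos θ).const_mul r).sub_const 1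
      have h2 : HasDerivAt (fun θ => r - cos θ) (-(-sin θ)) θ :=
        (hasDerivAt_cos θ).const_sub r
      have := h1.div h2 (hden θ).ne'
      apply this.congr_deriv
      ring
    have harc : HasDerivAt (fun θ => arccos (u θ))
        (-(1 / Real.sqrt (1 - u θ ^ 2)) * (sin θ * (1 - r^2) / (r - cos θ)^2)) θ :=
      (Real.hasDerivAt_arccos hu1 hu2).comp θ hud
    have hsqrt : Real.sqrt (1 - u θ ^ 2) = Real.sqrt (r^2-1) * sin θ / (r - cos θ) := by
      rw [hu_sq θ]
      rw [show (r^2-1) * sin θ ^ 2 / (r - cos θ)^2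
          = (Real.sqrt (r^2-1) * sin θ / (r - cos θ))^2 by
        rw [div_pow, mul_pow, Real.sq_sqrt hD.le]]
      exact Real.sqrt_sq (le_of_lt (div_pos (mul_pos hsD hsin) (hden θ)))
    have hval := harc.const_mul (-(1/Real.sqrt (r^2-1)))
    apply hval.congr_deriv
    symm
    rw [hsqrt]
    rw [show (1:ℝ)/(cos θ - r) = -((r - cos θ)⁻¹) by rw [neg_inv, neg_sub, one_div]]
    have hss2 : Real.sqrt (r^2-1) ^ 2 = r^2-1 := Real.sq_sqrt hD.le
    field_simp [hsD.ne', hsin.ne', (hden θ).ne']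
    linear_combination (-1) * hss2
  have hint : IntervalIntegrable (fun θ => 1/(cos θ - r)) volume 0 π := by
    apply Continuous.intervalIntegrable
    apply Continuous.div continuous_const (by continuity)
    intro θ; have h := hden θ; intro hc; rw [sub_eq_zero] at hc; rw [hc] at h; simp at h
  have := intervalIntegral.integral_eq_sub_of_hasDerivAt_of_le pi_pos.le hFcont hderiv hint
  rw [this]
  have hu0 : u 0 = 1 := by
    rw [hu_def]; simp; have := hden 0; simp at this; intro h; linarith
  have hupi : u π = -1 := by
    rw [hu_def]; simp
    rw [div_eq_iff (by have := hden π; simp at this ⊢; linarith)]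
    ring
  rw [hF_def]
  simp only [hu0, hupi, Real.arccos_one, Real.arccos_neg_one]
  field_simp
  ring

noncomputable def Jint (r : ℝ) (m n : ℕ) : ℝ :=
  ∫ θ in (0:ℝ)..π, cos (n*θ) * sin θ ^ (2*m) / (cos θ - r)

lemma cos_ne_r {r : ℝ} (hr : 1 < |r|) (θ : ℝ) : cos θ - r ≠ 0 := by
  intro h; rw [sub_eq_zero] at h
  have h1 := abs_cos_le_one θ
  rw [h] at h1; linarith

lemma contJ {r : ℝ} (hr : 1 < |r|) (k m : ℕ) :
    Continuous fun θ : ℝ => cos (k*θ) * sin θ ^ (2*m) / (cos θ - r) :=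
  Continuous.div (by continuity) (by continuity) (fun θ => cos_ne_r hr θ)

lemma Jrec (r : ℝ) (hr : 1 < |r|) (m n : ℕ) :
    Jint r m (n+2) = 2 * Aint m (n+1) + 2*r* Jint r m (n+1) - Jint r m n := by
  have key : ∀ θ ∈ uIcc (0:ℝ) π,
      cos ((n+2:ℕ)*θ) * sin θ ^ (2*m) / (cos θ - r)
      = 2 * (cos ((n+1:ℕ)*θ) * sin θ ^ (2*m)) +
        (2*r) * (cos ((n+1:ℕ)*θ) * sin θ ^ (2*m) / (cos θ - r))
        - cos ((n:ℕ)*θ) * sin θ ^ (2*m) / (cos θ - r) := by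
    intro θ _
    have h1 : ((n+2:ℕ):ℝ)*θ = ((n+1:ℕ):ℝ)*θ + θ := by push_cast; ring
    have h2 : ((n:ℕ):ℝ)*θ = ((n+1:ℕ):ℝ)*θ - θ := by push_cast; ring
    rw [h1, h2, cos_add, cos_sub]
    field_simp [cos_ne_r hr θ]
    ring
  have hA := (contA m (n+1)).intervalIntegrable (μ := volume) 0 π
  have hJ : ∀ k : ℕ, IntervalIntegrable
      (fun θ : ℝ => cos (k*θ) * sin θ ^ (2*m) / (cos θ - r)) volume 0 π :=
    fun k => (contJ hr k m).intervalIntegrable 0 π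
  unfold Jint Aint
  rw [intervalIntegral.integral_congr key,
    intervalIntegral.integral_sub ((hA.const_mul 2).add ((hJ (n+1)).const_mul (2*r))) (hJ n),
    intervalIntegral.integral_add (hA.const_mul 2) ((hJ (n+1)).const_mul (2*r)),
    intervalIntegral.integral_const_mul, intervalIntegral.integral_const_mul]

lemma Jstep (r : ℝ) (hr : 1 < |r|) (m l : ℕ) :
    Jint r (m+1) (l+1) = (1-r^2) * Jint r m (l+1)
      - (1/2) * Aint m (l+2) - (1/2) * Aint m l - r * Aint m (l+1) := by
  have key : ∀ θ ∈ uIcc (0:ℝ) π,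
      cos ((l+1:ℕ)*θ) * sin θ ^ (2*(m+1)) / (cos θ - r)
      = (1-r^2) * (cos ((l+1:ℕ)*θ) * sin θ ^ (2*m) / (cos θ - r))
        - (1/2) * (cos ((l+2:ℕ)*θ) * sin θ ^ (2*m))
        - (1/2) * (cos ((l:ℕ)*θ) * sin θ ^ (2*m))
        - r * (cos ((l+1:ℕ)*θ) * sin θ ^ (2*m)) := by
    intro θ _
    have h1 : ((l+2:ℕ):ℝ)*θ = ((l+1:ℕ):ℝ)*θ + θ := by push_cast; ring
    have h2 : ((l:ℕ):ℝ)*θ = ((l+1:ℕ):ℝ)*θ - θ := by push_cast; ring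
    have hs2 : sin θ ^ 2 = 1 - cos θ ^ 2 := sin_sq θ
    push_cast
    rw [show ((l:ℝ)+2)*θ = ((l:ℝ)+1)*θ + θ by ring, show (l:ℝ)*θ = ((l:ℝ)+1)*θ - θ by ring,
      cos_add, cos_sub]
    field_simp [cos_ne_r hr θ]
    linear_combination (2 * cos (((l:ℝ)+1)*θ) * sin θ ^ (2*m)) * hs2
  have hA : ∀ k : ℕ, IntervalIntegrable
      (fun θ : ℝ => cos (k*θ) * sin θ ^ (2*m)) volume 0 π :=
    fun k => (contA m k).intervalIntegrable 0 π
  have hJ : IntervalIntegrable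
      (fun θ : ℝ => cos ((l+1:ℕ)*θ) * sin θ ^ (2*m) / (cos θ - r)) volume 0 π :=
    (contJ hr (l+1) m).intervalIntegrable 0 π
  unfold Jint Aint
  rw [intervalIntegral.integral_congr key]
  rw [intervalIntegral.integral_sub
      ((((hJ.const_mul _).sub ((hA (l+2)).const_mul _)).sub ((hA l).const_mul _)))
      ((hA (l+1)).const_mul _),
    intervalIntegral.integral_sub ((hJ.const_mul _).sub ((hA (l+2)).const_mul _))
      ((hA l).const_mul _),
    intervalIntegral.integral_sub (hJ.const_mul _) ((hA (l+2)).const_mul _),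
    intervalIntegral.integral_const_mul, intervalIntegral.integral_const_mul,
    intervalIntegral.integral_const_mul, intervalIntegral.integral_const_mul]


lemma Jmain (r : ℝ) (hr : 1 < r) : ∀ m n : ℕ, 2*m ≤ n →
    Jint r m n = -π * (-1:ℝ)^m * (r^2-1)^((m:ℝ)-1/2) * (r - Real.sqrt (r^2-1))^n := by
  have hr' : 1 < |r| := by rw [abs_of_pos (by linarith)]; exact hr
  have hD : 0 < r^2 - 1 := by nlinarith
  have hsD : 0 < Real.sqrt (r^2-1) := Real.sqrt_pos.2 hD
  have hss : Real.sqrt (r^2-1) ^ 2 = r^2-1 := Real.sq_sqrt hD.le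
  have hq : (r - Real.sqrt (r^2-1))^2 = 2*r*(r - Real.sqrt (r^2-1)) - 1 := by
    nlinarith [hss]
  have hrpow0 : (r^2-1) ^ (((0:ℕ):ℝ)-1/2) = (Real.sqrt (r^2-1))⁻¹ := by
    rw [show (((0:ℕ):ℝ)-1/2) = -(1/2) by norm_num, Real.rpow_neg hD.le,
      ← Real.sqrt_eq_rpow]
  intro m
  induction m with
  | zero =>
    intro n _
    induction n using Nat.strong_induction_on with
    | _ n ih =>
      match n with
      | 0 =>
        have h0 : Jint r 0 0 = ∫ θ in (0:ℝ)..π, 1/(cos θ - r) := by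
          unfold Jint
          apply intervalIntegral.integral_congr
          intro θ _
          norm_num
        rw [h0, J00 r hr, hrpow0]
        simp [div_eq_mul_inv]
      | 1 =>
        have h1 : Jint r 0 1 = π + r * ∫ θ in (0:ℝ)..π, 1/(cos θ - r) := by
          unfold Jint
          rw [intervalIntegral.integral_congr (g := fun θ =>
              1 + r * (1/(cos θ - r))) (by
            intro θ _
            have := cos_ne_r hr' θ
            field_simp; simp)]
          have hc : Continuous fun θ : ℝ => 1/(cos θ - r) :=
            continuous_const.div (continuous_cos.sub continuous_const)
              (fun θ => cos_ne_r hr' θ)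
          rw [intervalIntegral.integral_add intervalIntegrable_const
              ((hc.intervalIntegrable 0 π).const_mul r),
            intervalIntegral.integral_const_mul]
          norm_num
        rw [h1, J00 r hr, hrpow0]
        rw [pow_one, pow_zero]
        field_simp
        ring
      | (k+2) =>
        rw [Jrec r hr' 0 k, A_eq_zero 0 (k+1) (by omega),
          ih (k+1) (by omega) (by omega), ih k (by omega) (by omega)]
        rw [hrpow0]
        linear_combination (π * (Real.sqrt (r^2-1))⁻¹ * (r - Real.sqrt (r^2-1))^k) * hq
  | succ m ihm =>
    intro n hn
    obtain ⟨l, rfl⟩ : ∃ l, n = l + 1 := ⟨n - 1, by omega⟩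
    rw [Jstep r hr' m l, A_eq_zero m (l+2) (by omega), A_eq_zero m l (by omega),
      A_eq_zero m (l+1) (by omega), ihm (l+1) (by omega)]
    have hpow : (1-r^2) * (r^2-1) ^ ((m:ℝ)-1/2) = -((r^2-1) ^ ((((m+1:ℕ)):ℝ)-1/2)) := by
      rw [show ((((m+1:ℕ)):ℝ)-1/2) = ((m:ℝ)-1/2) + 1 by push_cast; ring,
        Real.rpow_add hD, Real.rpow_one]
      ring
    rw [show ((-1:ℝ))^(m+1) = -(-1:ℝ)^m by ring]
    linear_combination (-π * (-1:ℝ)^m * (r - Real.sqrt (r^2-1))^(l+1)) * hpow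

lemma Jneg (r : ℝ) (m n : ℕ) : Jint r m n = (-1:ℝ)^(n+1) * Jint (-r) m n := by
  unfold Jint
  rw [← intervalIntegral.integral_const_mul]
  rw [show (∫ θ in (0:ℝ)..π, cos (n*θ) * sin θ ^ (2*m) / (cos θ - r))
      = ∫ θ in (0:ℝ)..π, (fun x => cos (n*x) * sin x ^ (2*m) / (cos x - r)) (π - θ) from by
    rw [intervalIntegral.integral_comp_sub_left
      (fun x => cos (n*x) * sin x ^ (2*m) / (cos x - r)) π]
    norm_num]
  apply intervalIntegral.integral_congr
  intro θ _
  simp only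
  rw [show (n:ℝ) * (π - θ) = n*π - n*θ by ring, Real.cos_nat_mul_pi_sub, Real.sin_pi_sub,
    Real.cos_pi_sub]
  rw [show Real.cos θ - -r = -(- Real.cos θ - r) by ring]
  rw [div_neg]
  ring

lemma Jall (r : ℝ) (hr : 1 < |r|) (m n : ℕ) (hn : 2*m ≤ n) :
    Jint r m n = π * (-1:ℝ)^(m+1) * (|r|/r) * (r^2-1)^((m:ℝ)-1/2) *
      (r - |r|/r * Real.sqrt (r^2-1))^n := by
  have hne : r ≠ 0 := by intro h; rw [h] at hr; norm_num at hr
  rcases lt_or_gt_of_ne hne with hneg | hpos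
  · -- r < 0, so r < -1
    have hr1 : 1 < -r := by rwa [abs_of_neg hneg] at hr
    have habs : |r|/r = -1 := by rw [abs_of_neg hneg]; field_simp
    rw [Jneg r m n, Jmain (-r) hr1 m n hn, habs]
    rw [show ((-r)^2 - 1 : ℝ) = r^2 - 1 by ring]
    have hpow : (-r - Real.sqrt (r^2-1))^n = (-1:ℝ)^n * (r + Real.sqrt (r^2-1))^n := by
      rw [show (-r - Real.sqrt (r^2-1) : ℝ) = -1 * (r + Real.sqrt (r^2-1)) by ring, mul_pow]
    rw [hpow, show (r - (-1) * Real.sqrt (r^2-1)) = r + Real.sqrt (r^2-1) by ring]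
    have h2 : (-1:ℝ)^(n+1) * (-1:ℝ)^n = -1 := by
      rw [← pow_add]; exact Odd.neg_one_pow ⟨n, by ring⟩
    linear_combination (-π * (-1:ℝ)^m * (r^2-1)^((m:ℝ)-1/2) * (r + Real.sqrt (r^2-1))^n) * h2
  · have hr1 : 1 < r := by rwa [abs_of_pos hpos] at hr
    have habs : |r|/r = 1 := by rw [abs_of_pos hpos]; field_simp
    rw [Jmain r hr1 m n hn, habs, pow_add]
    ring

lemma cheb_subst (r : ℝ) (hr : 1 < |r|) (m n : ℕ) :
    (∫ s in (-1:ℝ)..1,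
      (Polynomial.Chebyshev.T ℝ n).eval s * (1 - s ^ 2) ^ ((m : ℝ) - 1 / 2) / (s - r))
    = Jint r m n := by
  set g : ℝ → ℝ := fun s =>
    (Polynomial.Chebyshev.T ℝ n).eval s * (1 - s ^ 2) ^ ((m : ℝ) - 1 / 2) / (s - r) with hg
  have himg : cos '' Ioo 0 π = Ioo (-1:ℝ) 1 := by
    apply Subset.antisymm
    · rintro _ ⟨θ, hθ, rfl⟩
      have h1 : cos π < cos θ :=
        strictAntiOn_cos ⟨hθ.1.le, hθ.2.le⟩ ⟨pi_pos.le, le_refl π⟩ hθ.2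
      have h2 : cos θ < cos 0 :=
        strictAntiOn_cos ⟨le_refl 0, pi_pos.le⟩ ⟨hθ.1.le, hθ.2.le⟩ hθ.1
      rw [cos_pi] at h1; rw [cos_zero] at h2
      exact ⟨h1, h2⟩
    · intro y hy
      refine ⟨arccos y, ⟨arccos_pos.2 hy.2, ?_⟩, cos_arccos hy.1.le hy.2.le⟩
      exact lt_of_le_of_ne (arccos_le_pi y) (fun h => by
        have := arccos_eq_pi.1 h; linarith [hy.1])
  have hderiv : ∀ x ∈ Ioo (0:ℝ) π, HasDerivWithinAt cos (-sin x) (Ioo 0 π) x :=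
    fun x _ => (hasDerivAt_cos x).hasDerivWithinAt
  have hinj : InjOn cos (Ioo 0 π) := injOn_cos.mono Ioo_subset_Icc_self
  have key := integral_image_eq_integral_abs_deriv_smul measurableSet_Ioo hderiv hinj g
  rw [himg] at key
  have hpt : ∀ θ ∈ Ioo (0:ℝ) π,
      |(-sin θ)| • g (cos θ) = cos (n*θ) * sin θ ^ (2*m) / (cos θ - r) := by
    intro θ hθ
    have hsin : 0 < sin θ := sin_pos_of_pos_of_lt_pi hθ.1 hθ.2
    have hT : (Polynomial.Chebyshev.T ℝ n).eval (cos θ) = cos (n*θ) := by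
      have := Polynomial.Chebyshev.T_real_cos θ (n : ℤ)
      rw [this]; push_cast; ring_nf
    rw [abs_neg, abs_of_nonneg hsin.le, hg]
    simp only [smul_eq_mul]
    rw [hT]
    rw [show (1 - cos θ ^ 2 : ℝ) = sin θ ^ 2 by rw [sin_sq]]
    have hpow : sin θ * ((sin θ ^ 2) ^ ((m:ℝ) - 1/2)) = sin θ ^ (2*m) := by
      rw [show ((sin θ ^ 2 : ℝ)) = sin θ ^ ((2:ℕ):ℝ) from (Real.rpow_natCast _ 2).symm,
        ← Real.rpow_natCast (sin θ) (2*m), ← Real.rpow_mul hsin.le]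
      nth_rewrite 1 [← Real.rpow_one (sin θ)]
      rw [← Real.rpow_add hsin]
      congr 1
      push_cast; ring
    have hcr : cos θ - r ≠ 0 := by
      intro h; rw [sub_eq_zero] at h
      have h1 := abs_cos_le_one θ; rw [h] at h1; linarith
    field_simp [hcr]
    ring_nf
    ring_nf at hpow
    linear_combination (cos ((n:ℝ)*θ)) * hpow
  rw [intervalIntegral.integral_of_le (by norm_num : (-1:ℝ) ≤ 1),
    integral_Ioc_eq_integral_Ioo, key,
    setIntegral_congr_fun measurableSet_Ioo hpt]
  rw [Jint, intervalIntegral.integral_of_le pi_pos.le, integral_Ioc_eq_integral_Ioo]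

/-- For integers `m ≥ 0`, `n ≥ 2m` and real `r` with `|r| > 1`,
`∫_{-1}^{1} T_n(s)(1-s²)^{m-1/2}/(s-r) ds
  = π (-1)^{m+1} (|r|/r) (r²-1)^{m-1/2} (r - (|r|/r)√(r²-1))^n`. -/
theorem S1_T_general (m n : ℕ) (hn : 2 * m ≤ n) (r : ℝ) (hr : 1 < |r|) :
    ∫ s in (-1 : ℝ)..1,
        (Polynomial.Chebyshev.T ℝ n).eval s * (1 - s ^ 2) ^ ((m : ℝ) - 1 / 2) / (s - r) =
      Real.pi * (-1 : ℝ) ^ (m + 1) * (|r| / r) * (r ^ 2 - 1) ^ ((m : ℝ) - 1 / 2) *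
        (r - |r| / r * Real.sqrt (r ^ 2 - 1)) ^ n := by
  rw [cheb_subst r hr m n, Jall r hr m n hn]
end

section
/- Let m ≥ 1 and n ≥ 2m − 2 be integers and let r ∈ ℝ with |r| > 1. Then the (ordinary Lebesgue) integral ∫_{−1}^{1} U_n(s)·(1−s²)^{m−1/2}/(s−r) ds equals π·(−1)^m·(r²−1)^{m−1}·( r − sgn(r)·√(r²−1) )^{n+1}, where sgn(r) = |r|/r denotes the sign of r. (In particular, for m = 1 this gives ∫_{−1}^{1} U_n(s)·√(1−s²)/(s−r) ds = −π·( r − sgn(r)·√(r²−1) )^{n+1} for all n ≥ 0.) -/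
namespace S1helpers

open Real intervalIntegral MeasureTheory Set Polynomial Polynomial.Chebyshev


lemma key_integral (c : ℝ) (hc : 1 < |c|) :
    ∫ φ in (-(π/2))..(π/2), (Real.sin φ + c)⁻¹ = (|c|/c) * π / Real.sqrt (c^2 - 1) := by
  have hc0 : c ≠ 0 := by intro h; rw [h, abs_zero] at hc; linarith
  have hc1 : 1 < c^2 := by nlinarith [sq_abs c, hc]
  have hw : 0 < Real.sqrt (c^2 - 1) := Real.sqrt_pos.2 (by linarith)
  set w : ℝ := Real.sqrt (c^2 - 1) with hwdef
  have hw2 : w^2 = c^2 - 1 := Real.sq_sqrt (by linarith)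
  have hne : ∀ x : ℝ, Real.sin x + c ≠ 0 := by
    intro x h
    have h2 : |Real.sin x| ≤ 1 := abs_le.mpr ⟨Real.neg_one_le_sin x, Real.sin_le_one x⟩
    have h3 : Real.sin x = -c := by linarith
    rw [h3, abs_neg] at h2
    linarith
  set G : ℝ → ℝ := fun φ => (2/w) * Real.arctan ((c * Real.tan (φ/2) + 1)/w) with hG
  have hderiv : ∀ φ ∈ uIcc (-(π/2)) (π/2), HasDerivAt G ((Real.sin φ + c)⁻¹) φ := by
    intro φ hφ
    rw [uIcc_of_le (by linarith [Real.pi_pos] : -(π/2) ≤ π/2)] at hφ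
    have hφ2 : φ/2 ∈ Ioo (-(π/2)) (π/2) := by
      constructor
      · nlinarith [hφ.1, Real.pi_pos]
      · nlinarith [hφ.2, Real.pi_pos]
    have hcos : Real.cos (φ/2) ≠ 0 := ne_of_gt (Real.cos_pos_of_mem_Ioo hφ2)
    have h1 : HasDerivAt (fun x : ℝ => x/2) (1/2) φ := by
      simpa using (hasDerivAt_id φ).div_const 2
    have h2 : HasDerivAt (fun x : ℝ => Real.tan (x/2)) (1/Real.cos (φ/2)^2 * (1/2)) φ :=
      by have := (Real.hasDerivAt_tan hcos).comp φ h1; exact this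
    have h3 : HasDerivAt (fun x : ℝ => (c * Real.tan (x/2) + 1)/w)
        ((c * (1/Real.cos (φ/2)^2 * (1/2)))/w) φ := ((h2.const_mul c).add_const 1).div_const w
    have h4 := (Real.hasDerivAt_arctan ((c * Real.tan (φ/2) + 1)/w)).comp φ h3
    have h5 := h4.const_mul (2/w)
    refine h5.congr_deriv ?_; symm
    rw [Real.tan_eq_sin_div_cos]
    have hsin : Real.sin φ = 2 * Real.sin (φ/2) * Real.cos (φ/2) := by
      rw [show φ = 2 * (φ/2) by ring, Real.sin_two_mul]; ring_nf
    have hpyth : Real.sin (φ/2)^2 + Real.cos (φ/2)^2 = 1 := Real.sin_sq_add_cos_sq _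
    have hne' : Real.sin φ + c ≠ 0 := hne φ
    rw [hsin] at hne' ⊢
    field_simp
    linear_combination (c^2) * hpyth
      + (Real.cos (φ/2)^2) * hw2
  have hint : IntervalIntegrable (fun φ => (Real.sin φ + c)⁻¹) volume (-(π/2)) (π/2) :=
    ((Real.continuous_sin.add continuous_const).inv₀ hne).intervalIntegrable _ _
  rw [intervalIntegral.integral_eq_sub_of_hasDerivAt hderiv hint]
  have ht1 : Real.tan ((π/2)/2) = 1 := by rw [show (π/2)/2 = π/4 by ring]; exact Real.tan_pi_div_four
  have ht2 : Real.tan ((-(π/2))/2) = -1 := by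
    rw [show (-(π/2))/2 = -(π/4) by ring, Real.tan_neg, Real.tan_pi_div_four]
  rw [hG]
  simp only [ht1, ht2]
  have hainv : ((c+1)/w)⁻¹ = (c-1)/w := by
    rw [inv_div]
    rw [div_eq_div_iff (by intro h; exact hc0 (by nlinarith : c = 0) ) hw.ne']
    · nlinarith [hw2]
  rcases lt_or_gt_of_ne hc0 with hcneg | hcpos
  · have hcc : c < -1 := by
      rcases lt_abs.1 hc with h' | h'
      · linarith
      · linarith
    have ha : (c+1)/w < 0 := div_neg_of_neg_of_pos (by linarith) hw
    have := Real.arctan_inv_of_neg ha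
    rw [hainv] at this
    have habs : |c|/c = -1 := by rw [abs_of_neg (by linarith : c < 0)]; field_simp
    have harc : Real.arctan ((c * (-1) + 1)/w) = Real.arctan (-((c-1)/w)) := by ring_nf
    rw [show (c * (-1) + 1)/w = -((c-1)/w) by ring, Real.arctan_neg, this, habs]
    ring
  · have hcc : 1 < c := by
      rcases lt_abs.1 hc with h' | h'
      · linarith
      · linarith
    have ha : 0 < (c+1)/w := div_pos (by linarith) hw
    have := Real.arctan_inv_of_pos ha
    rw [hainv] at this
    have habs : |c|/c = 1 := by rw [abs_of_pos (by linarith : 0 < c)]; field_simp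
    rw [show (c * (-1) + 1)/w = -((c-1)/w) by ring, Real.arctan_neg, this, habs]
    ring


-- substitution s = sin φ
lemma sub_sin {f : ℝ → ℝ} (hf : ContinuousOn f (Icc (-1) 1)) :
    ∫ s in (-1:ℝ)..1, f s = ∫ φ in (-(π/2))..(π/2), f (Real.sin φ) * Real.cos φ := by
  have h := intervalIntegral.integral_comp_mul_deriv' (a := -(π/2)) (b := π/2)
    (f := Real.sin) (f' := Real.cos) (g := f)
    (fun x _ => Real.hasDerivAt_sin x) Real.continuousOn_cos
    (hf.mono (by
      rintro y ⟨x, _, rfl⟩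
      exact ⟨Real.neg_one_le_sin x, Real.sin_le_one x⟩))
  simp only [Function.comp] at h
  rw [Real.sin_neg, Real.sin_pi_div_two] at h
  rw [← h]

-- substitution s = cos θ
lemma sub_cos {f : ℝ → ℝ} (hf : ContinuousOn f (Icc (-1) 1)) :
    ∫ s in (-1:ℝ)..1, f s = ∫ θ in (0:ℝ)..π, f (Real.cos θ) * Real.sin θ := by
  have h := intervalIntegral.integral_comp_mul_deriv' (a := π) (b := 0)
    (f := Real.cos) (f' := fun x => -Real.sin x) (g := f)
    (fun x _ => Real.hasDerivAt_cos x) (Real.continuous_sin.neg.continuousOn)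
    (hf.mono (by
      rintro y ⟨x, _, rfl⟩
      exact ⟨Real.neg_one_le_cos x, Real.cos_le_one x⟩))
  simp only [Function.comp] at h
  rw [Real.cos_pi, Real.cos_zero] at h
  rw [← h, intervalIntegral.integral_symm, ← intervalIntegral.integral_neg]
  apply intervalIntegral.integral_congr
  intro θ _
  ring


lemma sub_ne {r : ℝ} (hr : 1 < |r|) {s : ℝ} (hs : s ∈ Icc (-1:ℝ) 1) : s - r ≠ 0 := by
  intro h
  have : s = r := by linarith
  have : |r| ≤ 1 := this ▸ abs_le.mpr ⟨hs.1, hs.2⟩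
  linarith

lemma contOn_div {r : ℝ} (hr : 1 < |r|) {g : ℝ → ℝ} (hg : Continuous g) :
    ContinuousOn (fun s => g s / (s - r)) (Icc (-1:ℝ) 1) :=
  hg.continuousOn.div ((continuous_id.sub continuous_const).continuousOn)
    (fun s hs => sub_ne hr hs)

-- the base integral J0
lemma J0 (r : ℝ) (hr : 1 < |r|) :
    ∫ s in (-1:ℝ)..1, Real.sqrt (1 - s^2) / (s - r)
      = π * ((|r|/r) * Real.sqrt (r^2 - 1) - r) := by
  have hr0 : r ≠ 0 := by intro h; rw [h, abs_zero] at hr; linarith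
  have hr1 : 1 < r^2 := by nlinarith [sq_abs r, hr]
  have hw : 0 < Real.sqrt (r^2 - 1) := Real.sqrt_pos.2 (by linarith)
  set w : ℝ := Real.sqrt (r^2 - 1) with hwdef
  have hw2 : w^2 = r^2 - 1 := Real.sq_sqrt (by linarith)
  have hcont : ContinuousOn (fun s => Real.sqrt (1 - s^2) / (s - r)) (Icc (-1:ℝ) 1) :=
    contOn_div hr (Real.continuous_sqrt.comp (by continuity))
  rw [sub_sin hcont]
  have hpi : -(π/2) ≤ π/2 := by linarith [Real.pi_pos]
  have hcongr : ∀ φ ∈ uIcc (-(π/2)) (π/2),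
      Real.sqrt (1 - Real.sin φ^2) / (Real.sin φ - r) * Real.cos φ
        = (-(Real.sin φ) - r) + (1 - r^2) * (Real.sin φ + -r)⁻¹ := by
    intro φ hφ
    rw [uIcc_of_le hpi] at hφ
    have hcosnn : 0 ≤ Real.cos φ := Real.cos_nonneg_of_mem_Icc hφ
    have h1 : 1 - Real.sin φ^2 = Real.cos φ^2 := by
      have := Real.sin_sq_add_cos_sq φ; linarith
    rw [h1, Real.sqrt_sq hcosnn]
    have hne : Real.sin φ - r ≠ 0 := by
      intro h
      have h2 : |Real.sin φ| ≤ 1 := abs_le.mpr ⟨Real.neg_one_le_sin φ, Real.sin_le_one φ⟩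
      have h3 : Real.sin φ = r := by linarith
      rw [h3] at h2; linarith
    have h2 : Real.sin φ + -r ≠ 0 := by rw [← sub_eq_add_neg]; exact hne
    field_simp
    linear_combination (Real.sin φ - r) * Real.sin_sq_add_cos_sq φ
  rw [intervalIntegral.integral_congr hcongr]
  have hi1 : IntervalIntegrable (fun φ => -(Real.sin φ) - r) volume (-(π/2)) (π/2) :=
    (Real.continuous_sin.neg.sub continuous_const).intervalIntegrable _ _
  have hne' : ∀ x : ℝ, Real.sin x + -r ≠ 0 := by
    intro x h
    have h2 : |Real.sin x| ≤ 1 := abs_le.mpr ⟨Real.neg_one_le_sin x, Real.sin_le_one x⟩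
    have h3 : Real.sin x = r := by linarith
    rw [h3] at h2; linarith
  have hi2 : IntervalIntegrable (fun φ => (1 - r^2) * (Real.sin φ + -r)⁻¹) volume (-(π/2)) (π/2) :=
    (continuous_const.mul ((Real.continuous_sin.add continuous_const).inv₀ hne')).intervalIntegrable _ _
  rw [intervalIntegral.integral_add hi1 hi2]
  rw [intervalIntegral.integral_const_mul]
  have h3 : (∫ x in (-(π/2))..(π/2), (Real.sin x + -r)⁻¹)
      = (|(-r)|/(-r)) * π / Real.sqrt ((-r)^2-1) := key_integral (-r) (by rwa [abs_neg])
  rw [h3]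
  have h4 : (∫ x in (-(π/2))..(π/2), (-Real.sin x - r)) = -r * π := by
    have he : (fun x => -Real.sin x - r) = fun x => -(Real.sin x) + (-r) := by funext; ring
    rw [he, intervalIntegral.integral_add (f := fun x => -Real.sin x) ((Real.continuous_sin.neg).intervalIntegrable _ _)
      (intervalIntegrable_const), intervalIntegral.integral_neg, integral_sin, intervalIntegral.integral_const]
    simp [Real.cos_pi_div_two]
    ring
  rw [h4, abs_neg, show ((-r)^2 : ℝ) = r^2 by ring, ← hwdef]
  have habs : |r| ^ 2 = r ^ 2 := sq_abs r
  field_simp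
  linear_combination (-|r|) * hw2


lemma intcos (c : ℝ) (hc : c ≠ 0) (hs : Real.sin (c * π) = 0) :
    ∫ θ in (0:ℝ)..π, Real.cos (c*θ) = 0 := by
  have h := intervalIntegral.mul_integral_comp_mul_left (a := (0:ℝ)) (b := π) (c := c) (f := Real.cos)
  rw [integral_cos, mul_zero, Real.sin_zero, hs] at h
  have : c * ∫ θ in (0:ℝ)..π, Real.cos (c*θ) = 0 := by rw [h]; ring
  exact (mul_eq_zero.1 this).resolve_left hc

lemma ortho (k : ℕ) (hk : 1 ≤ k) :
    ∫ s in (-1:ℝ)..1, (U ℝ k).eval s * Real.sqrt (1-s^2) = 0 := by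
  have hcont : ContinuousOn (fun s => (U ℝ k).eval s * Real.sqrt (1-s^2)) (Icc (-1:ℝ) 1) :=
    ((U ℝ k).continuous_aeval.mul (Real.continuous_sqrt.comp (by continuity))).continuousOn
  rw [sub_cos hcont]
  have hpi : (0:ℝ) ≤ π := Real.pi_pos.le
  have hcongr : ∀ θ ∈ uIcc (0:ℝ) π,
      (U ℝ k).eval (Real.cos θ) * Real.sqrt (1 - Real.cos θ^2) * Real.sin θ
        = (Real.cos ((k:ℝ)*θ) - Real.cos (((k:ℝ)+2)*θ))/2 := by
    intro θ hθ
    rw [uIcc_of_le hpi] at hθ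
    have hsnn : 0 ≤ Real.sin θ := Real.sin_nonneg_of_nonneg_of_le_pi hθ.1 hθ.2
    have h1 : 1 - Real.cos θ^2 = Real.sin θ^2 := by
      have := Real.sin_sq_add_cos_sq θ; linarith
    rw [h1, Real.sqrt_sq hsnn]
    have hU := Polynomial.Chebyshev.U_real_cos θ (k : ℤ)
    push_cast at hU
    have hcc := Real.cos_sub_cos ((k:ℝ)*θ) (((k:ℝ)+2)*θ)
    rw [show ((k:ℝ)*θ + ((k:ℝ)+2)*θ)/2 = ((k:ℝ)+1)*θ by ring,
        show ((k:ℝ)*θ - ((k:ℝ)+2)*θ)/2 = -θ by ring, Real.sin_neg] at hcc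
    calc (U ℝ k).eval (Real.cos θ) * Real.sin θ * Real.sin θ
        = Real.sin (((k:ℝ)+1)*θ) * Real.sin θ := by rw [hU]
      _ = (Real.cos ((k:ℝ)*θ) - Real.cos (((k:ℝ)+2)*θ))/2 := by linear_combination (-1/2 : ℝ) * hcc
  rw [intervalIntegral.integral_congr hcongr]
  have hi1 : IntervalIntegrable (fun θ => Real.cos ((k:ℝ)*θ)) volume 0 π := by
    apply Continuous.intervalIntegrable; continuity
  have hi2 : IntervalIntegrable (fun θ => Real.cos (((k:ℝ)+2)*θ)) volume 0 π := by
    apply Continuous.intervalIntegrable; continuity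
  have hsplit : ∀ θ : ℝ, (Real.cos ((k:ℝ)*θ) - Real.cos (((k:ℝ)+2)*θ))/2
      = (1/2) * (Real.cos ((k:ℝ)*θ) - Real.cos (((k:ℝ)+2)*θ)) := by intro θ; ring
  simp only [hsplit]
  rw [intervalIntegral.integral_const_mul, intervalIntegral.integral_sub hi1 hi2]
  have hk0 : (k:ℝ) ≠ 0 := Nat.cast_ne_zero.2 (by omega)
  rw [intcos (k:ℝ) hk0 (Real.sin_nat_mul_pi k),
      intcos ((k:ℝ)+2) (by positivity) (by exact_mod_cast Real.sin_nat_mul_pi (k+2))]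
  ring


lemma contU (j : ℤ) : Continuous (fun s : ℝ => (U ℝ j).eval s * Real.sqrt (1-s^2)) :=
  (U ℝ j).continuous_aeval.mul (Real.continuous_sqrt.comp (by continuity))

lemma iiUdiv {r : ℝ} (hr : 1 < |r|) (j : ℤ) :
    IntervalIntegrable (fun s => (U ℝ j).eval s * Real.sqrt (1-s^2)/(s-r)) volume (-1) 1 := by
  apply ContinuousOn.intervalIntegrable
  rw [uIcc_of_le (by norm_num : (-1:ℝ) ≤ 1)]
  exact (contU j).continuousOn.div ((continuous_id.sub continuous_const).continuousOn)
    (fun s hs => sub_ne hr hs)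

lemma Jm1 (r : ℝ) (hr : 1 < |r|) (n : ℕ) :
    ∫ s in (-1:ℝ)..1, (U ℝ n).eval s * Real.sqrt (1-s^2)/(s-r)
      = -π * (r - |r|/r * Real.sqrt (r^2-1))^(n+1) := by
  have hr0 : r ≠ 0 := by intro h; rw [h, abs_zero] at hr; linarith
  have hr1 : 1 < r^2 := by nlinarith [sq_abs r, hr]
  set w : ℝ := Real.sqrt (r^2 - 1) with hwdef
  have hw2 : w^2 = r^2 - 1 := Real.sq_sqrt (by linarith)
  set ρ : ℝ := r - |r|/r * w with hρdef
  have hq : (|r|/r)^2 = 1 := by rw [div_pow, sq_abs]; field_simp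
  have hρ : ρ^2 = 2*r*ρ - 1 := by rw [hρdef]; linear_combination w^2 * hq + hw2
  -- two-step induction
  suffices h : ∀ k : ℕ,
      (∫ s in (-1:ℝ)..1, (U ℝ k).eval s * Real.sqrt (1-s^2)/(s-r) = -π * ρ^(k+1)) ∧
      (∫ s in (-1:ℝ)..1, (U ℝ (k+1:ℕ)).eval s * Real.sqrt (1-s^2)/(s-r) = -π * ρ^(k+2)) by
    exact (h n).1
  intro k
  induction k with
  | zero =>
    constructor
    · have : ∀ s, (U ℝ (0:ℕ)).eval s * Real.sqrt (1-s^2)/(s-r) = Real.sqrt (1-s^2)/(s-r) := by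
        intro s; simp [Polynomial.Chebyshev.U_zero]
      simp only [this]
      rw [J0 r hr, pow_one, hρdef]
      ring
    · have hcongr : ∀ s ∈ uIcc (-1:ℝ) 1, (U ℝ (1:ℕ)).eval s * Real.sqrt (1-s^2)/(s-r)
          = 2 * (Real.sqrt (1-s^2)) + 2*r*(Real.sqrt (1-s^2)/(s-r)) := by
        intro s hs
        rw [uIcc_of_le (by norm_num : (-1:ℝ) ≤ 1)] at hs
        have hne := sub_ne hr hs
        simp only [Nat.cast_one, Polynomial.Chebyshev.U_one, eval_mul, eval_ofNat, eval_X]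
        field_simp
        ring
      rw [intervalIntegral.integral_congr hcongr]
      have ii1 : IntervalIntegrable (fun s : ℝ => 2 * Real.sqrt (1-s^2)) volume (-1) 1 := by
        apply Continuous.intervalIntegrable
        exact continuous_const.mul (Real.continuous_sqrt.comp (by continuity))
      have ii2 : IntervalIntegrable (fun s : ℝ => 2*r*(Real.sqrt (1-s^2)/(s-r))) volume (-1) 1 := by
        have := (iiUdiv hr (0:ℤ)).const_mul (2*r)
        simpa [Polynomial.Chebyshev.U_zero] using this
      rw [intervalIntegral.integral_add ii1 ii2, intervalIntegral.integral_const_mul,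
        intervalIntegral.integral_const_mul, J0 r hr, ← hwdef]
      have hsq : ∫ s in (-1:ℝ)..1, Real.sqrt (1-s^2) = π/2 := by
        simpa using integral_sqrt_one_sub_sq
      rw [hsq]
      linear_combination (-π) * hρ + (2*r*π) * hρdef + (2*π*w^2) * hq + (2*π) * hw2
  | succ k ih =>
    refine ⟨ih.2, ?_⟩
    have hcast : ((k+1+1 : ℕ) : ℤ) = (k:ℤ) + 2 := by push_cast; ring
    have hrec := Polynomial.Chebyshev.U_add_two ℝ (k:ℤ)
    have hcongr : ∀ s ∈ uIcc (-1:ℝ) 1, (U ℝ (k+1+1:ℕ)).eval s * Real.sqrt (1-s^2)/(s-r)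
        = 2 * ((U ℝ (k+1:ℕ)).eval s * Real.sqrt (1-s^2))
          + 2*r*((U ℝ (k+1:ℕ)).eval s * Real.sqrt (1-s^2)/(s-r))
          - (U ℝ (k:ℕ)).eval s * Real.sqrt (1-s^2)/(s-r) := by
      intro s hs
      rw [uIcc_of_le (by norm_num : (-1:ℝ) ≤ 1)] at hs
      have hne := sub_ne hr hs
      rw [hcast, hrec]
      have hc1 : ((k+1 : ℕ) : ℤ) = (k:ℤ) + 1 := by push_cast; ring
      rw [hc1]
      simp only [eval_sub, eval_mul, eval_ofNat, eval_X]
      field_simp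
      ring
    rw [intervalIntegral.integral_congr hcongr]
    have ii1 : IntervalIntegrable (fun s : ℝ => 2 * ((U ℝ (k+1:ℕ)).eval s * Real.sqrt (1-s^2)))
        volume (-1) 1 := (Continuous.intervalIntegrable (continuous_const.mul (contU _)) _ _)
    have ii2 := (iiUdiv hr ((k+1:ℕ):ℤ)).const_mul (2*r)
    have ii3 := iiUdiv hr ((k:ℕ):ℤ)
    rw [intervalIntegral.integral_sub (ii1.add ii2) ii3,
      intervalIntegral.integral_add ii1 ii2, intervalIntegral.integral_const_mul,
      intervalIntegral.integral_const_mul, ortho (k+1) (by omega), ih.1, ih.2]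
    linear_combination (π * ρ^(k+1)) * hρ


lemma contRpow {c : ℝ} (hc : 0 < c) : Continuous (fun s : ℝ => (1-s^2) ^ c) := by
  rw [continuous_iff_continuousAt]
  intro s
  exact ContinuousAt.rpow_const (by fun_prop) (Or.inr hc.le)

lemma iiUrpow {r : ℝ} (hr : 1 < |r|) (j : ℤ) {c : ℝ} (hc : 0 < c) :
    IntervalIntegrable (fun s => (U ℝ j).eval s * (1-s^2)^c/(s-r)) volume (-1) 1 := by
  apply ContinuousOn.intervalIntegrable
  rw [uIcc_of_le (by norm_num : (-1:ℝ) ≤ 1)]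
  exact (((U ℝ j).continuous_aeval.mul (contRpow hc)).continuousOn).div
    ((continuous_id.sub continuous_const).continuousOn) (fun s hs => sub_ne hr hs)

lemma Jgen (r : ℝ) (hr : 1 < |r|) (m : ℕ) (hm : 1 ≤ m) : ∀ n : ℕ, 2*m-2 ≤ n →
    ∫ s in (-1:ℝ)..1, (U ℝ n).eval s * (1-s^2)^((m:ℝ)-1/2)/(s-r)
      = π * (-1:ℝ)^m * (r^2-1)^(m-1) * (r - |r|/r * Real.sqrt (r^2-1))^(n+1) := by
  have hr0 : r ≠ 0 := by intro h; rw [h, abs_zero] at hr; linarith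
  have hr1 : 1 < r^2 := by nlinarith [sq_abs r, hr]
  set w : ℝ := Real.sqrt (r^2 - 1) with hwdef
  have hw2 : w^2 = r^2 - 1 := Real.sq_sqrt (by linarith)
  set ρ : ℝ := r - |r|/r * w with hρdef
  have hq : (|r|/r)^2 = 1 := by rw [div_pow, sq_abs]; field_simp
  have hρ : ρ^2 = 2*r*ρ - 1 := by rw [hρdef]; linear_combination w^2 * hq + hw2
  induction m, hm using Nat.le_induction with
  | base =>
    intro n _
    have he : ((1:ℕ):ℝ) - 1/2 = (1/2 : ℝ) := by norm_num
    simp only [he, ← Real.sqrt_eq_rpow]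
    rw [Jm1 r hr n]
    simp
    rfl
  | succ m hm1 IH =>
    intro n hn
    obtain ⟨k, rfl⟩ : ∃ k, n = k + 2 := ⟨n - 2, by omega⟩
    have hk : 2*m-2 ≤ k := by omega
    have hmpos : (0:ℝ) < (m:ℝ) - 1/2 := by
      have : (1:ℝ) ≤ (m:ℝ) := by exact_mod_cast hm1
      linarith
    -- polynomial recurrence at eval level
    have hpoly : ∀ s : ℝ, 4*(1-s^2)*(U ℝ ((k:ℤ)+2)).eval s
        = 2*(U ℝ ((k:ℤ)+2)).eval s - (U ℝ ((k:ℤ)+4)).eval s - (U ℝ (k:ℤ)).eval s := by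
      intro s
      have h0 := congrArg (eval s) (U_add_two ℝ (k:ℤ))
      have h1 := congrArg (eval s) (U_add_two ℝ ((k:ℤ)+1))
      have h2 := congrArg (eval s) (U_add_two ℝ ((k:ℤ)+2))
      rw [show (k:ℤ)+1+2 = (k:ℤ)+3 by ring, show (k:ℤ)+1+1 = (k:ℤ)+2 by ring] at h1
      rw [show (k:ℤ)+2+2 = (k:ℤ)+4 by ring, show (k:ℤ)+2+1 = (k:ℤ)+3 by ring] at h2
      simp only [eval_sub, eval_mul, eval_ofNat, eval_X] at h0 h1 h2
      linear_combination h2 + 2*s*h1 + h0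
    have hcongr : ∀ s ∈ uIcc (-1:ℝ) 1,
        (U ℝ (k+2:ℕ)).eval s * (1-s^2)^(((m+1:ℕ):ℝ)-1/2)/(s-r)
          = (2*((U ℝ (k+2:ℕ)).eval s * (1-s^2)^((m:ℝ)-1/2)/(s-r))
             - (U ℝ (k+4:ℕ)).eval s * (1-s^2)^((m:ℝ)-1/2)/(s-r)
             - (U ℝ (k:ℕ)).eval s * (1-s^2)^((m:ℝ)-1/2)/(s-r))/4 := by
      intro s hs
      rw [uIcc_of_le (by norm_num : (-1:ℝ) ≤ 1)] at hs
      have hne := sub_ne hr hs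
      have hpow : (1-s^2)^(((m+1:ℕ):ℝ)-1/2) = (1-s^2) * (1-s^2)^((m:ℝ)-1/2) := by
        have h1s : 0 ≤ 1 - s^2 := by nlinarith [hs.1, hs.2]
        rcases eq_or_lt_of_le h1s with h | h
        · rw [← h, Real.zero_rpow (by push_cast; linarith), Real.zero_rpow (by linarith), mul_zero]
        · rw [show (((m+1:ℕ)):ℝ)-1/2 = 1 + ((m:ℝ)-1/2) by push_cast; ring,
            Real.rpow_add h, Real.rpow_one]
      rw [hpow, show ((k+2:ℕ):ℤ) = (k:ℤ)+2 by push_cast; ring,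
        show ((k+4:ℕ):ℤ) = (k:ℤ)+4 by push_cast; ring]
      have hps := hpoly s
      set W := (1-s^2)^((m:ℝ)-1/2) with hW
      linear_combination (W * (s-r)⁻¹ / 4) * hps
    rw [intervalIntegral.integral_congr hcongr]
    have ii2 := iiUrpow hr ((k:ℤ)+2) hmpos
    have ii4 := iiUrpow hr ((k:ℤ)+4) hmpos
    have ii0 := iiUrpow hr (k:ℤ) hmpos
    have hc2 : ((k+2:ℕ):ℤ) = (k:ℤ)+2 := by push_cast; ring
    have hc4 : ((k+4:ℕ):ℤ) = (k:ℤ)+4 := by push_cast; ring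
    rw [intervalIntegral.integral_div]
    rw [hc2, hc4]
    rw [intervalIntegral.integral_sub ((ii2.const_mul 2).sub ii4) ii0,
      intervalIntegral.integral_sub (ii2.const_mul 2) ii4,
      intervalIntegral.integral_const_mul]
    have E2 := IH (k+2) (by omega)
    have E4 := IH (k+4) (by omega)
    have E0 := IH k hk
    rw [hc2] at E2
    rw [hc4] at E4
    rw [E2, E4, E0]
    rw [show (m+1)-1 = m from rfl, show m = (m-1)+1 by omega, pow_succ]
    rw [show ((m-1)+1)+1 = (m-1)+2 by omega]
    push_cast
    rw [show (m-1:ℕ)+(2:ℕ) = ((m-1)+1)+1 by omega]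
    linear_combination ((π * (-1:ℝ)^((m-1)+1) * (r^2-1)^(m-1) / 4) * ρ^(k+1)
      * (-ρ^2 - 2*r*ρ - 1)) * hρ

end S1helpers

/-- For integers `m ≥ 1`, `n ≥ 2m - 2` and real `r` with `|r| > 1`,
`∫_{-1}^{1} U_n(s)(1-s²)^{m-1/2}/(s-r) ds
  = π (-1)^m (r²-1)^{m-1} (r - (|r|/r)√(r²-1))^{n+1}`. -/
theorem S1_U_general (m n : ℕ) (hm : 1 ≤ m) (hn : 2 * m - 2 ≤ n) (r : ℝ) (hr : 1 < |r|) :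
    ∫ s in (-1 : ℝ)..1,
        (Polynomial.Chebyshev.U ℝ n).eval s * (1 - s ^ 2) ^ ((m : ℝ) - 1 / 2) / (s - r) =
      Real.pi * (-1 : ℝ) ^ m * (r ^ 2 - 1) ^ (m - 1) *
        (r - |r| / r * Real.sqrt (r ^ 2 - 1)) ^ (n + 1) := by
  exact S1helpers.Jgen r hr m hm n hn
end
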